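/- Suppose X : ℝ → ℂ is measurable and there exist C, M > 0 such that ∫ (ω^{2k−2} + ω^{2k+2})/2 · |X(ω)|² dω ≤ k! C^{−k} M for all odd k ≥ 1. Then there exists T > 0 such that ∫ e^{2T|ω|} |X(ω)|² dω < ∞. -/

import Mathlib

open MeasureTheory Real

set_option maxHeartbeats 1000000 in
theorem factorial_moment_bounds_imply_exp_decay (X : ℝ → ℂ) (C M : ℝ) (hC : 0 < C) (hM : 0 < M)
    (hmeas : Measurable X)
    (hint : ∀ k : ℕ, Odd k → Integrable
      (fun ω : ℝ => (ω ^ (2 * k - 2) + ω ^ (2 * k + 2)) / 2 * ‖X ω‖ ^ 2))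
    (hbd : ∀ k : ℕ, Odd k →
      (∫ ω : ℝ, (ω ^ (2 * k - 2) + ω ^ (2 * k + 2)) / 2 * ‖X ω‖ ^ 2)
        ≤ (k.factorial : ℝ) * C⁻¹ ^ k * M) :
    ∃ T : ℝ, 0 < T ∧
      Integrable (fun ω : ℝ => Real.exp (2 * T * |ω|) * ‖X ω‖ ^ 2) := by
  have habs : Measurable fun ω : ℝ => ‖X ω‖ ^ 2 :=
    (continuous_norm.measurable.comp hmeas).pow_const 2
  set g : ℝ → ℝ := fun ω => ‖X ω‖ ^ 2 with hgdef
  have hg0 : ∀ ω, 0 ≤ g ω := fun ω => sq_nonneg _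
  have hpow0 : ∀ (ω : ℝ) (k : ℕ), 0 ≤ ω ^ (2 * k) := by
    intro ω k; rw [pow_mul]; positivity
  set D : ℝ := C⁻¹ + 1 with hDdef
  have hD1 : (1 : ℝ) ≤ D := le_add_of_nonneg_left (inv_nonneg.2 hC.le)
  have hD0 : (0 : ℝ) < D := lt_of_lt_of_le one_pos hD1
  have hCD : C⁻¹ ≤ D := le_add_of_nonneg_right one_pos.le
  -- pointwise AM-GM
  have hptw : ∀ (k : ℕ), 1 ≤ k → ∀ ω : ℝ, ω ^ (2 * k) ≤ (ω ^ (2 * k - 2) + ω ^ (2 * k + 2)) / 2 := by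
    intro k hk ω
    obtain ⟨j, rfl⟩ := Nat.exists_eq_add_of_le hk
    have h1 : 2 * (1 + j) - 2 = 2 * j := by omega
    have h2 : 2 * (1 + j) + 2 = 2 * j + 4 := by omega
    have h3 : 2 * (1 + j) = 2 * j + 2 := by omega
    rw [h1, h2, h3]
    have e1 : ω ^ (2 * j + 2) = ω ^ (2 * j) * ω ^ 2 := by ring
    have e2 : ω ^ (2 * j + 4) = ω ^ (2 * j) * ω ^ 4 := by ring
    rw [e1, e2]
    nlinarith [mul_nonneg (hpow0 ω j) (sq_nonneg (ω ^ 2 - 1))]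
  -- odd moments
  have hodd : ∀ k : ℕ, Odd k → Integrable (fun ω => ω ^ (2 * k) * g ω) ∧
      (∫ ω, ω ^ (2 * k) * g ω) ≤ (k.factorial : ℝ) * C⁻¹ ^ k * M := by
    intro k hk
    have hk1 : 1 ≤ k := hk.pos
    have hdom : ∀ ω, ‖ω ^ (2 * k) * g ω‖ ≤ (ω ^ (2 * k - 2) + ω ^ (2 * k + 2)) / 2 * g ω := by
      intro ω
      rw [Real.norm_eq_abs, abs_of_nonneg (mul_nonneg (hpow0 ω k) (hg0 ω))]
      exact mul_le_mul_of_nonneg_right (hptw k hk1 ω) (hg0 ω)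
    have hint' := hint k hk
    have hInt : Integrable (fun ω => ω ^ (2 * k) * g ω) :=
      hint'.mono (((measurable_id.pow_const (2 * k)).mul habs).aestronglyMeasurable)
        (Filter.Eventually.of_forall fun ω => le_trans (hdom ω) (le_abs_self _))
    refine ⟨hInt, le_trans (integral_mono hInt hint' (fun ω => ?_)) (hbd k hk)⟩
    exact le_trans (le_abs_self _) (hdom ω)
  -- factorial bound helper
  have hfact : ∀ k j : ℕ, k ≤ j → (k.factorial : ℝ) * C⁻¹ ^ k * M ≤ M * j.factorial * D ^ j := by
    intro k j hkj
    have h1 : C⁻¹ ^ k ≤ D ^ j :=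
      le_trans (pow_le_pow_left₀ (inv_nonneg.2 hC.le) hCD k) (pow_le_pow_right₀ hD1 hkj)
    have h2 : (k.factorial : ℝ) ≤ (j.factorial : ℝ) := by
      exact_mod_cast Nat.factorial_le hkj
    have h3 : (0 : ℝ) ≤ C⁻¹ ^ k := pow_nonneg (inv_nonneg.2 hC.le) k
    have h4 : (0 : ℝ) < (j.factorial : ℝ) := by exact_mod_cast Nat.factorial_pos _
    calc (k.factorial : ℝ) * C⁻¹ ^ k * M ≤ (j.factorial : ℝ) * D ^ j * M := by
          apply mul_le_mul_of_nonneg_right _ hM.le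
          exact mul_le_mul h2 h1 h3 h4.le
      _ = M * j.factorial * D ^ j := by ring
  -- all moments
  have hall : ∀ k : ℕ, Integrable (fun ω => ω ^ (2 * k) * g ω) ∧
      (∫ ω, ω ^ (2 * k) * g ω) ≤ 2 * M * (k + 2).factorial * D ^ (k + 2) := by
    intro k
    rcases Nat.even_or_odd k with hke | hko
    · rcases Nat.eq_zero_or_pos k with rfl | hkpos
      · -- k = 0
        have hi1 := hint 1 odd_one
        have hdom : ∀ ω : ℝ, ‖ω ^ (2 * 0) * g ω‖ ≤
            2 * ((ω ^ (2 * 1 - 2) + ω ^ (2 * 1 + 2)) / 2 * g ω) := by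
          intro ω
          simp only [Nat.mul_zero, pow_zero, one_mul]
          rw [Real.norm_eq_abs, abs_of_nonneg (hg0 ω)]
          have h4 : (0 : ℝ) ≤ ω ^ 4 := by positivity
          have h1 : (1 : ℝ) ≤ 2 * ((ω ^ (2 * 1 - 2) + ω ^ (2 * 1 + 2)) / 2) := by
            norm_num
            linarith
          nlinarith [hg0 ω]
        have hInt : Integrable (fun ω => ω ^ (2 * 0) * g ω) :=
          (hi1.const_mul 2).mono (((measurable_id.pow_const (2 * 0)).mul habs).aestronglyMeasurable)
            (Filter.Eventually.of_forall fun ω => le_trans (hdom ω) (le_abs_self _))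
        refine ⟨hInt, ?_⟩
        have hmono := integral_mono hInt (hi1.const_mul 2)
          (fun ω => le_trans (le_abs_self _) (hdom ω))
        rw [integral_const_mul] at hmono
        have hb := (hbd 1 odd_one).trans (hfact 1 2 (by omega))
        refine hmono.trans ?_
        have h4 : (0 : ℝ) < M * ((2:ℕ).factorial : ℝ) * D ^ 2 := by
          have h5 : (0:ℝ) < ((2:ℕ).factorial : ℝ) := by exact_mod_cast Nat.factorial_pos 2
          positivity
        norm_num [Nat.factorial] at hb ⊢
        nlinarith [hb, hM, hD0, pow_pos hD0 2]
      · -- k even, k ≥ 1 : k-1 and k+1 odd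
        have hkm : Odd (k - 1) := by
          rcases hke with ⟨m, rfl⟩
          exact ⟨m - 1, by omega⟩
        have hkp : Odd (k + 1) := hke.add_one
        obtain ⟨hI1, hle1⟩ := hodd (k - 1) hkm
        obtain ⟨hI2, hle2⟩ := hodd (k + 1) hkp
        have hIsum : Integrable (fun ω : ℝ => ω ^ (2 * (k - 1)) * g ω + ω ^ (2 * (k + 1)) * g ω) :=
          hI1.add hI2
        have hdom : ∀ ω : ℝ, ‖ω ^ (2 * k) * g ω‖ ≤
            ω ^ (2 * (k - 1)) * g ω + ω ^ (2 * (k + 1)) * g ω := by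
          intro ω
          rw [Real.norm_eq_abs, abs_of_nonneg (mul_nonneg (hpow0 ω k) (hg0 ω))]
          have e1 : 2 * k - 2 = 2 * (k - 1) := by omega
          have e2 : 2 * k + 2 = 2 * (k + 1) := by omega
          have h := hptw k hkpos ω
          rw [e1, e2] at h
          have h1 := hpow0 ω (k - 1)
          have h2 := hpow0 ω (k + 1)
          have h3 : ω ^ (2 * k) ≤ ω ^ (2 * (k - 1)) + ω ^ (2 * (k + 1)) := by linarith
          nlinarith [hg0 ω]
        have hInt : Integrable (fun ω => ω ^ (2 * k) * g ω) :=
          hIsum.mono (((measurable_id.pow_const (2 * k)).mul habs).aestronglyMeasurable)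
            (Filter.Eventually.of_forall fun ω => le_trans (hdom ω) (le_abs_self _))
        refine ⟨hInt, ?_⟩
        have hmono := integral_mono hInt hIsum (fun ω => le_trans (le_abs_self _) (hdom ω))
        rw [integral_add hI1 hI2] at hmono
        have hb1 : (∫ ω, ω ^ (2 * (k - 1)) * g ω) ≤ M * (k + 2).factorial * D ^ (k + 2) :=
          hle1.trans (hfact (k - 1) (k + 2) (by omega))
        have hb2 : (∫ ω, ω ^ (2 * (k + 1)) * g ω) ≤ M * (k + 2).factorial * D ^ (k + 2) :=
          hle2.trans (hfact (k + 1) (k + 2) (by omega))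
        have heq : (2:ℝ) * M * (k + 2).factorial * D ^ (k + 2)
            = M * (k + 2).factorial * D ^ (k + 2) + M * (k + 2).factorial * D ^ (k + 2) := by ring
        rw [heq]
        exact hmono.trans (add_le_add hb1 hb2)
    · obtain ⟨hInt, hle⟩ := hodd k hko
      refine ⟨hInt, (hle.trans (hfact k (k + 2) (by omega))).trans ?_⟩
      have h4 : (0 : ℝ) < ((k + 2).factorial : ℝ) := by exact_mod_cast Nat.factorial_pos _
      linarith [mul_pos (mul_pos hM h4) (pow_pos hD0 (k + 2))]
  -- choose T
  set T : ℝ := 1 / (2 * Real.sqrt D) with hTdef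
  have hs0 : 0 < Real.sqrt D := Real.sqrt_pos.2 hD0
  have hT0 : 0 < T := by rw [hTdef]; positivity
  have h2T0 : (0 : ℝ) ≤ 2 * T := by linarith
  have hTs : 2 * T = (Real.sqrt D)⁻¹ := by rw [hTdef]; field_simp
  have h2T : (2 * T) ^ 2 = D⁻¹ := by
    rw [hTs, ← Real.sqrt_inv, Real.sq_sqrt (inv_nonneg.2 hD0.le)]
  have hDne : D ≠ 0 := hD0.ne'
  have hprod : ∀ k : ℕ, (2 * T) ^ (2 * k) * D ^ (k + 2) = D ^ 2 := by
    intro k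
    rw [pow_mul, h2T, inv_pow, pow_add]
    field_simp
  -- fraction bound
  have hfrac : ∀ k : ℕ, ((k + 2).factorial : ℝ) / ((2 * k).factorial : ℝ)
      ≤ 4 * 4 ^ k / (k.factorial : ℝ) := by
    intro k
    have hn1 : k.factorial * k.factorial ≤ (2 * k).factorial :=
      Nat.le_of_dvd (Nat.factorial_pos _)
        (by simpa [two_mul] using Nat.factorial_mul_factorial_dvd_factorial_add k k)
    have hn2 : k + 1 ≤ 2 ^ k := Nat.lt_two_pow_self (n := k)
    have hn3 : k + 2 ≤ 2 * 2 ^ k := by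
      calc k + 2 ≤ 2 * (k + 1) := by omega
        _ ≤ 2 * 2 ^ k := Nat.mul_le_mul_left 2 hn2
    have hnat : (k + 2).factorial * k.factorial ≤ 4 * 4 ^ k * (2 * k).factorial := by
      have e : (k + 2).factorial = (k + 2) * ((k + 1) * k.factorial) := by
        rw [Nat.factorial_succ, Nat.factorial_succ]
      calc (k + 2).factorial * k.factorial
          = ((k + 2) * (k + 1)) * (k.factorial * k.factorial) := by rw [e]; ring
        _ ≤ ((2 * 2 ^ k) * 2 ^ k) * ((2 * k).factorial) :=
            Nat.mul_le_mul (Nat.mul_le_mul hn3 hn2) hn1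
        _ = 2 * 4 ^ k * (2 * k).factorial := by
            have h4 : (4 : ℕ) ^ k = 2 ^ k * 2 ^ k := by
              rw [show (4 : ℕ) = 2 * 2 from rfl, Nat.mul_pow]
            rw [h4]; ring
        _ ≤ 4 * 4 ^ k * (2 * k).factorial :=
            Nat.mul_le_mul_right _ (Nat.mul_le_mul_right _ (by norm_num))
    have hp1 : (0 : ℝ) < ((2 * k).factorial : ℝ) := by exact_mod_cast Nat.factorial_pos _
    have hp2 : (0 : ℝ) < (k.factorial : ℝ) := by exact_mod_cast Nat.factorial_pos _
    rw [div_le_div_iff₀ hp1 hp2]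
    exact_mod_cast hnat
  refine ⟨T, hT0, ?_⟩
  have hexpmeas : Measurable fun ω : ℝ => Real.exp (2 * T * |ω|) :=
    Real.measurable_exp.comp (measurable_const.mul measurable_abs)
  refine ⟨(hexpmeas.mul habs).aestronglyMeasurable, ?_⟩
  rw [hasFiniteIntegral_iff_ofReal (Filter.Eventually.of_forall fun ω =>
    mul_nonneg (Real.exp_nonneg _) (hg0 ω))]
  -- pointwise key bound
  have key : ∀ ω : ℝ, ENNReal.ofReal (Real.exp (2 * T * |ω|) * g ω)
      ≤ ∑' k, ENNReal.ofReal
        (2 * ((2 * T) ^ (2 * k) / ((2 * k).factorial : ℝ)) * (ω ^ (2 * k) * g ω)) := by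
    intro ω
    have habspow : ∀ k : ℕ, |ω| ^ (2 * k) = ω ^ (2 * k) := by
      intro k; rw [pow_mul, sq_abs, ← pow_mul]
    have hterm : ∀ k : ℕ, ((2 * T * |ω|) ^ (2 * k) / ((2 * k).factorial : ℝ)) * (2 * g ω)
        = 2 * ((2 * T) ^ (2 * k) / ((2 * k).factorial : ℝ)) * (ω ^ (2 * k) * g ω) := by
      intro k; rw [mul_pow, habspow k]; ring
    have hsum2 : Summable
        (fun k : ℕ => ((2 * T * |ω|) ^ (2 * k) / ((2 * k).factorial : ℝ)) * (2 * g ω)) :=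
      (Real.hasSum_cosh (2 * T * |ω|)).summable.mul_right _
    have hle : Real.exp (2 * T * |ω|) * g ω ≤ Real.cosh (2 * T * |ω|) * (2 * g ω) := by
      rw [Real.cosh_eq]
      nlinarith [mul_nonneg (Real.exp_nonneg (-(2 * T * |ω|))) (hg0 ω)]
    calc ENNReal.ofReal (Real.exp (2 * T * |ω|) * g ω)
        ≤ ENNReal.ofReal (Real.cosh (2 * T * |ω|) * (2 * g ω)) := ENNReal.ofReal_le_ofReal hle
      _ = ENNReal.ofReal (∑' k, ((2 * T * |ω|) ^ (2 * k) / ((2 * k).factorial : ℝ)) * (2 * g ω)) := by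
          rw [Real.cosh_eq_tsum, ← tsum_mul_right]
      _ = ∑' k, ENNReal.ofReal
            (((2 * T * |ω|) ^ (2 * k) / ((2 * k).factorial : ℝ)) * (2 * g ω)) :=
          ENNReal.ofReal_tsum_of_nonneg (fun k => mul_nonneg
            (div_nonneg (pow_nonneg (mul_nonneg h2T0 (abs_nonneg ω)) _) (Nat.cast_nonneg _))
            (by linarith [hg0 ω])) hsum2
      _ = ∑' k, ENNReal.ofReal
            (2 * ((2 * T) ^ (2 * k) / ((2 * k).factorial : ℝ)) * (ω ^ (2 * k) * g ω)) := by
          congr 1; funext k; rw [hterm k]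
  have hFmeas : ∀ k : ℕ, Measurable fun ω : ℝ =>
      ENNReal.ofReal (2 * ((2 * T) ^ (2 * k) / ((2 * k).factorial : ℝ)) * (ω ^ (2 * k) * g ω)) :=
    fun k => ENNReal.measurable_ofReal.comp
      (((measurable_id.pow_const (2 * k)).mul habs).const_mul _)
  have hc0 : ∀ k : ℕ, (0 : ℝ) ≤ 2 * ((2 * T) ^ (2 * k) / ((2 * k).factorial : ℝ)) := by
    intro k
    exact mul_nonneg (by norm_num)
      (div_nonneg (pow_nonneg h2T0 _) (Nat.cast_nonneg _))
  have step : ∀ k : ℕ,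
      (∫⁻ ω, ENNReal.ofReal
        (2 * ((2 * T) ^ (2 * k) / ((2 * k).factorial : ℝ)) * (ω ^ (2 * k) * g ω)))
      ≤ ENNReal.ofReal ((2 * ((2 * T) ^ (2 * k) / ((2 * k).factorial : ℝ)))
          * (2 * M * (k + 2).factorial * D ^ (k + 2))) := by
    intro k
    have hI : Integrable (fun ω : ℝ =>
        2 * ((2 * T) ^ (2 * k) / ((2 * k).factorial : ℝ)) * (ω ^ (2 * k) * g ω)) :=
      (hall k).1.const_mul _
    have hae : 0 ≤ᵐ[volume] fun ω : ℝ =>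
        2 * ((2 * T) ^ (2 * k) / ((2 * k).factorial : ℝ)) * (ω ^ (2 * k) * g ω) :=
      Filter.Eventually.of_forall fun ω =>
        mul_nonneg (hc0 k) (mul_nonneg (hpow0 ω k) (hg0 ω))
    rw [← MeasureTheory.ofReal_integral_eq_lintegral_ofReal hI hae]
    apply ENNReal.ofReal_le_ofReal
    rw [integral_const_mul]
    exact mul_le_mul_of_nonneg_left (hall k).2 (hc0 k)
  have hterm_eq : ∀ k : ℕ,
      (2 * ((2 * T) ^ (2 * k) / ((2 * k).factorial : ℝ)))
        * (2 * M * (k + 2).factorial * D ^ (k + 2))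
      = 4 * M * D ^ 2 * (((k + 2).factorial : ℝ) / ((2 * k).factorial : ℝ)) := by
    intro k
    have hne : ((2 * k).factorial : ℝ) ≠ 0 := by
      exact_mod_cast (Nat.factorial_pos _).ne'
    rw [← hprod k]
    field_simp
    ring
  have hnn : ∀ k : ℕ, (0 : ℝ) ≤
      (2 * ((2 * T) ^ (2 * k) / ((2 * k).factorial : ℝ)))
        * (2 * M * (k + 2).factorial * D ^ (k + 2)) := by
    intro k
    have hp : (0 : ℝ) ≤ ((k + 2).factorial : ℝ) := Nat.cast_nonneg _
    have := hc0 k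
    have hD2 := pow_pos hD0 (k + 2)
    positivity
  have hbound : ∀ k : ℕ,
      (2 * ((2 * T) ^ (2 * k) / ((2 * k).factorial : ℝ)))
        * (2 * M * (k + 2).factorial * D ^ (k + 2))
      ≤ (4 * M * D ^ 2) * (4 * 4 ^ k / (k.factorial : ℝ)) := by
    intro k
    rw [hterm_eq k]
    exact mul_le_mul_of_nonneg_left (hfrac k) (by positivity)
  have hcompsum : Summable (fun k : ℕ => (4 * M * D ^ 2) * (4 * 4 ^ k / (k.factorial : ℝ))) := by
    have heq : (fun k : ℕ => (4 * M * D ^ 2) * (4 * 4 ^ k / (k.factorial : ℝ)))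
        = fun k : ℕ => (4 * M * D ^ 2 * 4) * (4 ^ k / (k.factorial : ℝ)) := by
      funext k; ring
    rw [heq]
    exact (Real.summable_pow_div_factorial 4).mul_left _
  have hsummable : Summable (fun k : ℕ =>
      (2 * ((2 * T) ^ (2 * k) / ((2 * k).factorial : ℝ)))
        * (2 * M * (k + 2).factorial * D ^ (k + 2))) :=
    Summable.of_nonneg_of_le hnn hbound hcompsum
  calc ∫⁻ ω, ENNReal.ofReal (Real.exp (2 * T * |ω|) * g ω)
      ≤ ∫⁻ ω, ∑' k, ENNReal.ofReal
          (2 * ((2 * T) ^ (2 * k) / ((2 * k).factorial : ℝ)) * (ω ^ (2 * k) * g ω)) :=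
        lintegral_mono key
    _ = ∑' k, ∫⁻ ω, ENNReal.ofReal
          (2 * ((2 * T) ^ (2 * k) / ((2 * k).factorial : ℝ)) * (ω ^ (2 * k) * g ω)) :=
        lintegral_tsum (fun k => (hFmeas k).aemeasurable)
    _ ≤ ∑' k, ENNReal.ofReal ((2 * ((2 * T) ^ (2 * k) / ((2 * k).factorial : ℝ)))
          * (2 * M * (k + 2).factorial * D ^ (k + 2))) := ENNReal.tsum_le_tsum step
    _ < ⊤ := by
        rw [← ENNReal.ofReal_tsum_of_nonneg hnn hsummable]
        exact ENNReal.ofReal_lt_top
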